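/- Define C(x) := E[log(1+f^{−1}(x)·Z)] for x ≥ 0, where Z is standard exponential and f^{−1} is the inverse of f(x) = E[log(1+xZ)]/E[Z/(1+xZ)] − x. Then C is continuous, strictly increasing on [0,∞), with C(0) = 0 and C(x) → +∞ as x → +∞. -/

import Mathlib

open MeasureTheory Set Filter
open scoped Topology

/-- f(x) = E[log(1+xZ)]/E[Z/(1+xZ)] − x for Z standard exponential. -/
noncomputable def waterfill (x : ℝ) : ℝ :=
  (∫ z in Ioi (0:ℝ), Real.log (1 + x * z) * Real.exp (-z)) /
    (∫ z in Ioi (0:ℝ), (z / (1 + x * z)) * Real.exp (-z)) - x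

noncomputable def Lfun (t : ℝ) : ℝ := ∫ z in Ioi (0:ℝ), Real.log (1 + t * z) * Real.exp (-z)
noncomputable def Dfun (t : ℝ) : ℝ := ∫ z in Ioi (0:ℝ), (z / (1 + t * z)) * Real.exp (-z)

lemma int_zexp : IntegrableOn (fun z : ℝ => z * Real.exp (-z)) (Ioi 0) := by
  have h := Real.GammaIntegral_convergent (s := 2) (by norm_num)
  refine h.congr_fun (fun x hx => ?_) measurableSet_Ioi
  simp only [show (2:ℝ) - 1 = 1 by norm_num, Real.rpow_one]
  ring

lemma meas_log {t : ℝ} (ht : 0 ≤ t) :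
    AEStronglyMeasurable (fun z : ℝ => Real.log (1 + t * z) * Real.exp (-z))
      (volume.restrict (Ioi 0)) := by
  refine ContinuousOn.aestronglyMeasurable ?_ measurableSet_Ioi
  refine ContinuousOn.mul ?_ (Continuous.continuousOn (by continuity))
  refine Real.continuousOn_log.comp (by fun_prop) ?_
  intro z hz
  have : (0:ℝ) < 1 + t * z := by
    have := mul_nonneg ht (le_of_lt hz)
    simp only [mem_Ioi] at hz; positivity
  simp [this.ne']

lemma one_add_pos {t z : ℝ} (ht : 0 ≤ t) (hz : 0 < z) : (0:ℝ) < 1 + t * z := by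
  have := mul_nonneg ht hz.le; positivity

lemma int_log {t : ℝ} (ht : 0 ≤ t) :
    IntegrableOn (fun z : ℝ => Real.log (1 + t * z) * Real.exp (-z)) (Ioi 0) := by
  refine Integrable.mono (int_zexp.const_mul t) (meas_log ht) ?_
  refine (ae_restrict_iff' measurableSet_Ioi).2 (Filter.Eventually.of_forall fun z hz => ?_)
  simp only [mem_Ioi] at hz
  have h1 : (0:ℝ) < 1 + t * z := one_add_pos ht hz
  have hlog0 : 0 ≤ Real.log (1 + t * z) :=
    Real.log_nonneg (by nlinarith)
  have hlog : Real.log (1 + t * z) ≤ t * z := by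
    have := Real.log_le_sub_one_of_pos h1; linarith
  rw [Real.norm_eq_abs, Real.norm_eq_abs, abs_of_nonneg (mul_nonneg hlog0 (Real.exp_pos _).le),
    abs_of_nonneg (by positivity : (0:ℝ) ≤ t * (z * Real.exp (-z))), ← mul_assoc]
  exact mul_le_mul_of_nonneg_right hlog (Real.exp_pos _).le

lemma meas_frac {t : ℝ} (ht : 0 ≤ t) :
    AEStronglyMeasurable (fun z : ℝ => (z / (1 + t * z)) * Real.exp (-z))
      (volume.restrict (Ioi 0)) := by
  refine ContinuousOn.aestronglyMeasurable ?_ measurableSet_Ioi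
  refine ContinuousOn.mul ?_ (Continuous.continuousOn (by continuity))
  refine ContinuousOn.div (continuous_id.continuousOn) (by fun_prop) ?_
  intro z hz
  exact (one_add_pos ht (mem_Ioi.1 hz)).ne'

lemma int_frac {t : ℝ} (ht : 0 ≤ t) :
    IntegrableOn (fun z : ℝ => (z / (1 + t * z)) * Real.exp (-z)) (Ioi 0) := by
  refine Integrable.mono int_zexp (meas_frac ht) ?_
  refine (ae_restrict_iff' measurableSet_Ioi).2 (Filter.Eventually.of_forall fun z hz => ?_)
  simp only [mem_Ioi] at hz
  have h1 : (0:ℝ) < 1 + t * z := one_add_pos ht hz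
  have hfr0 : 0 ≤ z / (1 + t * z) := div_nonneg hz.le h1.le
  have hfr : z / (1 + t * z) ≤ z := by
    rw [div_le_iff₀ h1]; nlinarith [mul_nonneg (mul_nonneg hz.le ht) hz.le]
  rw [Real.norm_eq_abs, Real.norm_eq_abs, abs_of_nonneg (mul_nonneg hfr0 (Real.exp_pos _).le),
    abs_of_nonneg (mul_nonneg hz.le (Real.exp_pos _).le)]
  exact mul_le_mul_of_nonneg_right hfr (Real.exp_pos _).le

lemma setIntegral_lt {f g : ℝ → ℝ} (hf : IntegrableOn f (Ioi 0)) (hg : IntegrableOn g (Ioi 0))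
    (h : ∀ z ∈ Ioi (0:ℝ), f z < g z) :
    (∫ z in Ioi (0:ℝ), f z) < ∫ z in Ioi (0:ℝ), g z := by
  have h0 : 0 < ∫ z in Ioi (0:ℝ), (g z - f z) := by
    rw [setIntegral_pos_iff_support_of_nonneg_ae
      ((ae_restrict_iff' measurableSet_Ioi).2
        (Filter.Eventually.of_forall fun z hz => sub_nonneg.2 (h z hz).le)) (hg.sub hf)]
    refine lt_of_lt_of_le ?_ (measure_mono (subset_inter (fun z hz => ?_) subset_rfl))
    · rw [Real.volume_Ioi]; exact ENNReal.zero_lt_top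
    · exact fun h0 => absurd h0 (sub_ne_zero.2 (h z hz).ne')
  rw [integral_sub hg hf] at h0
  linarith

lemma D_pos {t : ℝ} (ht : 0 ≤ t) : 0 < Dfun t := by
  have h := setIntegral_lt (f := fun _ => (0:ℝ)) (integrable_zero _ _ _) (int_frac ht)
    (fun z hz => mul_pos (div_pos (mem_Ioi.1 hz) (one_add_pos ht (mem_Ioi.1 hz))) (Real.exp_pos _))
  simpa [Dfun] using h

lemma L_nonneg {t : ℝ} (ht : 0 ≤ t) : 0 ≤ Lfun t := by
  refine setIntegral_nonneg measurableSet_Ioi fun z hz => ?_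
  simp only [mem_Ioi] at hz
  exact mul_nonneg (Real.log_nonneg (by nlinarith [mul_nonneg ht hz.le])) (Real.exp_pos _).le

lemma D_anti {a b : ℝ} (ha : 0 ≤ a) (hab : a < b) : Dfun b < Dfun a := by
  refine setIntegral_lt (int_frac (ha.trans hab.le)) (int_frac ha) fun z hz => ?_
  simp only [mem_Ioi] at hz
  refine mul_lt_mul_of_pos_right ?_ (Real.exp_pos _)
  exact div_lt_div_of_pos_left hz (one_add_pos ha hz)
    (by nlinarith [one_add_pos ha hz])

lemma L_key {a b : ℝ} (ha : 0 ≤ a) (hab : a < b) :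
    Lfun a + (b - a) * Dfun b < Lfun b := by
  have hb : 0 ≤ b := ha.trans hab.le
  have heq : Lfun a + (b - a) * Dfun b =
      ∫ z in Ioi (0:ℝ), (Real.log (1 + a * z) * Real.exp (-z) +
        (b - a) * ((z / (1 + b * z)) * Real.exp (-z))) := by
    rw [integral_add (int_log ha) ((int_frac hb).const_mul _), integral_const_mul]
    rfl
  rw [heq, Lfun]
  refine setIntegral_lt ((int_log ha).add ((int_frac hb).const_mul _)) (int_log hb)
    fun z hz => ?_
  simp only [mem_Ioi] at hz
  have h1 : (0:ℝ) < 1 + a * z := one_add_pos ha hz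
  have h2 : (0:ℝ) < 1 + b * z := one_add_pos hb hz
  have hne : (1 + a * z) / (1 + b * z) ≠ 1 := by
    refine div_ne_one_of_ne ?_; nlinarith
  have hx := Real.log_lt_sub_one_of_pos (div_pos h1 h2) hne
  rw [Real.log_div h1.ne' h2.ne'] at hx
  have hxx : (1 + a * z) / (1 + b * z) - 1 = -((b - a) * (z / (1 + b * z))) := by
    field_simp; ring
  rw [hxx] at hx
  have key : Real.log (1 + a * z) + (b - a) * (z / (1 + b * z)) < Real.log (1 + b * z) := by
    linarith
  have : Real.log (1 + a * z) * Real.exp (-z) + (b - a) * (z / (1 + b * z) * Real.exp (-z)) =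
      (Real.log (1 + a * z) + (b - a) * (z / (1 + b * z))) * Real.exp (-z) := by ring
  rw [this]
  exact mul_lt_mul_of_pos_right key (Real.exp_pos _)

lemma waterfill_eq (x : ℝ) : waterfill x = Lfun x / Dfun x - x := rfl

lemma waterfill_sm : StrictMonoOn waterfill (Ici 0) := by
  intro a ha b hb hab
  simp only [mem_Ici] at ha hb
  have hDb := D_pos hb
  have hDa := D_pos ha
  have hL := L_key ha hab
  have hAnti := D_anti ha hab
  have hLa := L_nonneg ha
  rw [waterfill_eq, waterfill_eq]
  have h1 : Lfun a / Dfun a ≤ Lfun a / Dfun b := by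
    apply div_le_div_of_nonneg_left hLa hDb hAnti.le
  have h2 : (Lfun a + (b - a) * Dfun b) / Dfun b < Lfun b / Dfun b :=
    div_lt_div_of_pos_right hL hDb
  have h3 : (Lfun a + (b - a) * Dfun b) / Dfun b = Lfun a / Dfun b + (b - a) := by
    field_simp
  linarith

lemma waterfill_zero : waterfill 0 = 0 := by
  simp [waterfill]

lemma L_zero : Lfun 0 = 0 := by simp [Lfun]

lemma waterfill_nonneg {y : ℝ} (hy : 0 ≤ y) : 0 ≤ waterfill y := by
  rcases eq_or_lt_of_le hy with h | h
  · rw [← h, waterfill_zero]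
  · rw [← waterfill_zero]
    exact (waterfill_sm (mem_Ici.2 le_rfl) (mem_Ici.2 hy) h).le

lemma L_sm : StrictMonoOn Lfun (Ici 0) := by
  intro a ha b hb hab
  simp only [mem_Ici] at ha hb
  refine setIntegral_lt (int_log ha) (int_log hb) fun z hz => ?_
  simp only [mem_Ioi] at hz
  refine mul_lt_mul_of_pos_right ?_ (Real.exp_pos _)
  exact Real.log_lt_log (one_add_pos ha hz) (by nlinarith)

lemma L_cont : ContinuousOn Lfun (Ici 0) := by
  intro t0 ht0
  simp only [mem_Ici] at ht0
  have key : Tendsto Lfun (𝓝[Ici 0] t0) (𝓝 (Lfun t0)) := by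
    refine tendsto_integral_filter_of_dominated_convergence
      (fun z => Real.log (1 + (t0 + 1) * z) * Real.exp (-z)) ?_ ?_ (int_log (by linarith)) ?_
    · filter_upwards [self_mem_nhdsWithin] with t ht
      exact meas_log (mem_Ici.1 ht)
    · have hIic : Iic (t0 + 1) ∈ 𝓝[Ici 0] t0 :=
        nhdsWithin_le_nhds (Iic_mem_nhds (by linarith))
      filter_upwards [self_mem_nhdsWithin, hIic] with t ht htle
      refine (ae_restrict_iff' measurableSet_Ioi).2 (Filter.Eventually.of_forall fun z hz => ?_)
      simp only [mem_Ioi] at hz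
      have ht0' : (0:ℝ) ≤ t := ht
      have h1 : (0:ℝ) < 1 + t * z := one_add_pos ht0' hz
      have hlog0 : 0 ≤ Real.log (1 + t * z) := Real.log_nonneg (by nlinarith)
      rw [Real.norm_eq_abs, abs_of_nonneg (mul_nonneg hlog0 (Real.exp_pos _).le)]
      refine mul_le_mul_of_nonneg_right ?_ (Real.exp_pos _).le
      refine Real.log_le_log h1 ?_
      have : t * z ≤ (t0 + 1) * z := mul_le_mul_of_nonneg_right htle hz.le
      linarith
    · refine (ae_restrict_iff' measurableSet_Ioi).2 (Filter.Eventually.of_forall fun z hz => ?_)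
      simp only [mem_Ioi] at hz
      have h1 : (0:ℝ) < 1 + t0 * z := one_add_pos ht0 hz
      have hc : ContinuousAt (fun t : ℝ => Real.log (1 + t * z) * Real.exp (-z)) t0 := by
        refine ContinuousAt.mul ?_ continuousAt_const
        exact ContinuousAt.log (by fun_prop) h1.ne'
      exact hc.tendsto.mono_left nhdsWithin_le_nhds
  exact key

lemma int_exp1 : IntegrableOn (fun z : ℝ => Real.exp (-z)) (Ioi 1) := by
  have := exp_neg_integrableOn_Ioi 1 (b := 1) one_pos
  simpa using this

lemma L_atTop : Tendsto Lfun atTop atTop := by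
  have hg : Tendsto (fun t : ℝ => Real.log (1 + t) * Real.exp (-1)) atTop atTop := by
    refine Tendsto.atTop_mul_const (Real.exp_pos _) ?_
    exact Real.tendsto_log_atTop.comp (tendsto_atTop_add_const_left atTop 1 tendsto_id)
  refine tendsto_atTop_mono' atTop ?_ hg
  filter_upwards [eventually_ge_atTop (0:ℝ)] with t ht
  have step1 : Real.log (1 + t) * Real.exp (-1) =
      ∫ z in Ioi (1:ℝ), Real.log (1 + t) * Real.exp (-z) := by
    rw [integral_const_mul, integral_exp_neg_Ioi]
  have step2 : (∫ z in Ioi (1:ℝ), Real.log (1 + t) * Real.exp (-z)) ≤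
      ∫ z in Ioi (1:ℝ), Real.log (1 + t * z) * Real.exp (-z) := by
    refine setIntegral_mono_on (int_exp1.const_mul _) ((int_log ht).mono_set
      (Ioi_subset_Ioi zero_le_one)) measurableSet_Ioi fun z hz => ?_
    simp only [mem_Ioi] at hz
    refine mul_le_mul_of_nonneg_right ?_ (Real.exp_pos _).le
    refine Real.log_le_log (by linarith) ?_
    nlinarith
  have step3 : (∫ z in Ioi (1:ℝ), Real.log (1 + t * z) * Real.exp (-z)) ≤ Lfun t := by
    refine setIntegral_mono_set (int_log ht) ?_
      (HasSubset.Subset.eventuallyLE (Ioi_subset_Ioi zero_le_one))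
    refine (ae_restrict_iff' measurableSet_Ioi).2 (Filter.Eventually.of_forall fun z hz => ?_)
    simp only [mem_Ioi] at hz
    exact mul_nonneg (Real.log_nonneg (by nlinarith)) (Real.exp_pos _).le
  linarith

lemma mono_surj_cont {g : ℝ → ℝ} (hm : StrictMonoOn g (Ici 0))
    (hs : SurjOn g (Ici 0) (Ici (g 0))) : ContinuousOn g (Ici 0) := by
  intro a ha
  have ha' : (0:ℝ) ≤ a := ha
  rcases eq_or_lt_of_le ha' with h0 | h0
  · have := hm.continuousWithinAt_right_of_surjOn self_mem_nhdsWithin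
      (hs.mono subset_rfl (Ioi_subset_Ici le_rfl))
    rw [← h0] at *
    exact this
  · refine (hm.continuousAt_of_exists_between (Ici_mem_nhds h0) ?_ ?_).continuousWithinAt
    · intro b hb
      have hga : g 0 < g a := hm (mem_Ici.2 le_rfl) ha h0
      obtain ⟨c, hc, hgc⟩ := hs (mem_Ici.2 (le_max_right b (g 0)))
      exact ⟨c, hc, by rw [hgc]; exact ⟨le_max_left _ _, max_lt hb hga⟩⟩
    · intro b hb
      have hga : g 0 ≤ g a := (hm.monotoneOn) (mem_Ici.2 le_rfl) ha ha'
      obtain ⟨c, hc, hgc⟩ := hs (mem_Ici.2 (le_trans hga hb.le))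
      exact ⟨c, hc, by rw [hgc]; exact ⟨hb, le_rfl⟩⟩

theorem C_strictMono (finv : ℝ → ℝ)
    (hmem : ∀ y ∈ Ici (0:ℝ), finv y ∈ Ici (0:ℝ))
    (hleft : ∀ x ∈ Ici (0:ℝ), finv (waterfill x) = x)
    (hright : ∀ y ∈ Ici (0:ℝ), waterfill (finv y) = y) :
    ContinuousOn
      (fun x : ℝ => ∫ z in Ioi (0:ℝ), Real.log (1 + finv x * z) * Real.exp (-z)) (Ici 0) ∧
    StrictMonoOn
      (fun x : ℝ => ∫ z in Ioi (0:ℝ), Real.log (1 + finv x * z) * Real.exp (-z)) (Ici 0) ∧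
    (∫ z in Ioi (0:ℝ), Real.log (1 + finv 0 * z) * Real.exp (-z)) = 0 ∧
    Tendsto (fun x : ℝ => ∫ z in Ioi (0:ℝ), Real.log (1 + finv x * z) * Real.exp (-z))
      atTop atTop := by
  have finv_zero : finv 0 = 0 := by
    have h := hleft 0 (mem_Ici.2 le_rfl)
    rwa [waterfill_zero] at h
  have finv_sm : StrictMonoOn finv (Ici 0) := by
    intro a ha b hb hab
    by_contra hcon
    push_neg at hcon
    rcases eq_or_lt_of_le hcon with he | hl
    · have : b = a := by rw [← hright a ha, ← hright b hb, he]
      exact absurd this (ne_of_gt hab)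
    · have h2 := waterfill_sm (hmem b hb) (hmem a ha) hl
      rw [hright a ha, hright b hb] at h2
      exact absurd hab (not_lt.2 h2.le)
  have C_sm : StrictMonoOn
      (fun x : ℝ => ∫ z in Ioi (0:ℝ), Real.log (1 + finv x * z) * Real.exp (-z)) (Ici 0) := by
    intro a ha b hb hab
    exact L_sm (hmem a ha) (hmem b hb) (finv_sm ha hb hab)
  have C0 : (∫ z in Ioi (0:ℝ), Real.log (1 + finv 0 * z) * Real.exp (-z)) = 0 := by
    rw [finv_zero]; simp
  have C_surj : SurjOn
      (fun x : ℝ => ∫ z in Ioi (0:ℝ), Real.log (1 + finv x * z) * Real.exp (-z))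
      (Ici 0) (Ici 0) := by
    intro y hy
    obtain ⟨T, hT⟩ := ((L_atTop.eventually_ge_atTop y).and (eventually_ge_atTop (0:ℝ))).exists
    have hy' : y ∈ Icc (Lfun 0) (Lfun T) := by
      rw [L_zero]; exact ⟨hy, hT.1⟩
    obtain ⟨t, htIcc, htval⟩ :=
      intermediate_value_Icc hT.2 (L_cont.mono (Icc_subset_Ici_self)) hy'
    refine ⟨waterfill t, mem_Ici.2 (waterfill_nonneg htIcc.1), ?_⟩
    show Lfun (finv (waterfill t)) = y
    rw [hleft t htIcc.1, htval]
  have C_cont : ContinuousOn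
      (fun x : ℝ => ∫ z in Ioi (0:ℝ), Real.log (1 + finv x * z) * Real.exp (-z)) (Ici 0) := by
    refine mono_surj_cont C_sm ?_
    rw [C0]
    exact C_surj
  have finv_top : Tendsto finv atTop atTop := by
    rw [tendsto_atTop]
    intro b
    filter_upwards [eventually_gt_atTop (waterfill (max b 0)), eventually_ge_atTop (0:ℝ)]
      with x h1 h2
    by_contra hcon
    push_neg at hcon
    have hfx : finv x ∈ Ici 0 := hmem x h2
    have hle : finv x ≤ max b 0 := hcon.le.trans (le_max_left b 0)
    have h3 := waterfill_sm.monotoneOn hfx (mem_Ici.2 (le_max_right b 0)) hle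
    rw [hright x h2] at h3
    exact absurd (h3.trans_lt h1) (lt_irrefl x)
  exact ⟨C_cont, C_sm, C0, L_atTop.comp finv_top⟩
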